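/- arXiv:2510.11229 — 2 statements merged into one kernel-verified Lean document; each statement's English description precedes it below -/
import Mathlib

section
/- Let A ∈ ℛ, and let X, X′ ≥ 0 be random vectors in ℝ^d with distributions F, G respectively. Suppose F ∈ 𝒮_A and ℙ(X ∈ x·A) / ℙ(X′ ∈ x·A) → c₀ as x → ∞ for some constant c₀ ∈ (0,∞). Then G ∈ 𝒮_A. -/
open MeasureTheory ProbabilityTheory Filter Set Topology
open scoped Pointwise ENNReal NNReal

/-- A set `A ⊆ ℝ^d` is increasing if `a ∈ A` and `y ≥ 0` imply `a + y ∈ A`. -/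
def IncreasingSet {d : ℕ} (A : Set (Fin d → ℝ)) : Prop :=
  ∀ a ∈ A, ∀ y : Fin d → ℝ, 0 ≤ y → a + y ∈ A

/-- The family `ℛ` of proper open increasing subsets of `ℝ^d` with convex complement
whose closure does not contain the origin. -/
def MemR {d : ℕ} (A : Set (Fin d → ℝ)) : Prop :=
  A ≠ Set.univ ∧ IsOpen A ∧ IncreasingSet A ∧ Convex ℝ Aᶜ ∧ (0 : Fin d → ℝ) ∉ closure A

/-- The translate `A + w = {a + w : a ∈ A}`. -/
def shiftSet {d : ℕ} (A : Set (Fin d → ℝ)) (w : Fin d → ℝ) : Set (Fin d → ℝ) :=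
  (fun a => a + w) '' A

/-- The tail `V̄(x) = V((x,∞))` of a measure on `ℝ`, as a real number. -/
noncomputable def tailR (V : Measure ℝ) (x : ℝ) : ℝ := (V (Set.Ioi x)).toReal

/-- A probability distribution on `ℝ` is long-tailed if its tail is everywhere positive and
`V̄(x-y)/V̄(x) → 1` as `x → ∞`, for every `y > 0`. -/
def IsLongTailed (V : Measure ℝ) : Prop :=
  (∀ x : ℝ, 0 < V (Set.Ioi x)) ∧
    ∀ y : ℝ, 0 < y → Tendsto (fun x => tailR V (x - y) / tailR V x) atTop (nhds 1)

/-- The (additive) convolution of two measures on `ℝ`. -/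
noncomputable def convAdd (μ ν : Measure ℝ) : Measure ℝ :=
  (μ.prod ν).map (fun p => p.1 + p.2)

/-- A probability distribution on `ℝ` is subexponential if it is supported on `[0,∞)`, its tail
is everywhere positive, and `(V∗V)((x,∞))/V̄(x) → 2` as `x → ∞`. -/
def IsSubexponential (V : Measure ℝ) : Prop :=
  V (Set.Iio 0) = 0 ∧ (∀ x : ℝ, 0 < V (Set.Ioi x)) ∧
    Tendsto (fun x => (convAdd V V (Set.Ioi x)).toReal / tailR V x) atTop (nhds 2)

/-- A probability distribution on `ℝ` is dominatedly varying if its tail is everywhere positive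
and `limsup_{x→∞} V̄(bx)/V̄(x) < ∞` for every `b ∈ (0,1)`. -/
def IsDomVarying (V : Measure ℝ) : Prop :=
  (∀ x : ℝ, 0 < V (Set.Ioi x)) ∧
    ∀ b : ℝ, b ∈ Set.Ioo (0 : ℝ) 1 →
      IsBoundedUnder (· ≤ ·) atTop (fun x => tailR V (b * x) / tailR V x)

/-- `Y_A(z) = sup{u > 0 : z ∈ u·A}` (with `sup ∅ = 0`). -/
noncomputable def YofA {d : ℕ} (A : Set (Fin d → ℝ)) (z : Fin d → ℝ) : ℝ :=
  sSup {u : ℝ | 0 < u ∧ z ∈ u • A}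

/-- `V` is the integrated-tail distribution `F_{I,A}` of the claim vector `X` (with law `F`
under `P`), formed with the vector `c` and normalizing constant `Θ`: it is a probability
measure on `ℝ` whose tail is `min(1, H(x)/Θ)` for `x > 0`, where
`H(x) = ∫₀^∞ ℙ(X ∈ x·A + v·c) dv`, and equals `1` for `x ≤ 0`. -/
def IsIntegratedTail {d : ℕ} {Ω : Type*} [MeasurableSpace Ω] (P : Measure Ω)
    (X : Ω → Fin d → ℝ) (A : Set (Fin d → ℝ)) (c : Fin d → ℝ) (Θ : ℝ)
    (V : Measure ℝ) : Prop :=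
  IsProbabilityMeasure V ∧
    (∀ x : ℝ, 0 < x →
      tailR V x =
        min 1 ((∫ v in Set.Ioi (0 : ℝ), (P (X ⁻¹' shiftSet (x • A) (v • c))).toReal) / Θ)) ∧
    (∀ x : ℝ, x ≤ 0 → V (Set.Ioi x) = 1)


section Geometry
variable {d : ℕ}

lemma memR_norm_lb {A : Set (Fin d → ℝ)} (hA : MemR A) :
    ∃ ε : ℝ, 0 < ε ∧ ∀ z ∈ A, ε ≤ ‖z‖ := by
  obtain ⟨ε, hε, hball⟩ := Metric.isOpen_iff.1 isClosed_closure.isOpen_compl 0 hA.2.2.2.2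
  refine ⟨ε, hε, fun z hz => ?_⟩
  by_contra h
  push_neg at h
  exact (hball (by simpa [Metric.mem_ball, dist_zero_right] using h)) (subset_closure hz)

lemma bddAbove_scaleSet {A : Set (Fin d → ℝ)} (hA : MemR A) (z : Fin d → ℝ) :
    BddAbove {u : ℝ | 0 < u ∧ z ∈ u • A} := by
  obtain ⟨ε, hε, hlb⟩ := memR_norm_lb hA
  refine ⟨‖z‖ / ε, fun u hu => ?_⟩
  obtain ⟨hu0, hz⟩ := hu
  rw [mem_smul_set_iff_inv_smul_mem₀ (ne_of_gt hu0)] at hz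
  have h1 : ε ≤ ‖u⁻¹ • z‖ := hlb _ hz
  rw [norm_smul, norm_inv, Real.norm_eq_abs, abs_of_pos hu0] at h1
  rw [le_div_iff₀ hε]
  have h2 : u * ε ≤ u * (u⁻¹ * ‖z‖) := mul_le_mul_of_nonneg_left h1 hu0.le
  rwa [← mul_assoc, mul_inv_cancel₀ (ne_of_gt hu0), one_mul] at h2

lemma mem_smul_set_of_le {A : Set (Fin d → ℝ)} (hA : MemR A) {z : Fin d → ℝ} (hz : 0 ≤ z)
    {u v : ℝ} (hu : 0 < u) (huv : u ≤ v) (hzv : z ∈ v • A) : z ∈ u • A := by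
  have hv : 0 < v := lt_of_lt_of_le hu huv
  rw [mem_smul_set_iff_inv_smul_mem₀ (ne_of_gt hv)] at hzv
  rw [mem_smul_set_iff_inv_smul_mem₀ (ne_of_gt hu)]
  have hinv : v⁻¹ ≤ u⁻¹ := by
    apply inv_anti₀ hu huv
  have key : u⁻¹ • z = v⁻¹ • z + (u⁻¹ - v⁻¹) • z := by
    rw [← add_smul]; congr 1; ring
  rw [key]
  exact hA.2.2.1 _ hzv _ (smul_nonneg (sub_nonneg.2 hinv) hz)

lemma YofA_nonneg {A : Set (Fin d → ℝ)} (z : Fin d → ℝ) : 0 ≤ YofA A z :=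
  Real.sSup_nonneg fun u hu => hu.1.le

lemma YofA_gt_iff {A : Set (Fin d → ℝ)} (hA : MemR A) {z : Fin d → ℝ} (hz : 0 ≤ z)
    {x : ℝ} (hx : 0 < x) : x < YofA A z ↔ z ∈ x • A := by
  constructor
  · intro h
    have hS : {u : ℝ | 0 < u ∧ z ∈ u • A}.Nonempty := by
      by_contra hne
      rw [not_nonempty_iff_eq_empty] at hne
      rw [YofA, hne, Real.sSup_empty] at h
      linarith
    obtain ⟨u, hu, hxu⟩ := exists_lt_of_lt_csSup hS h
    exact mem_smul_set_of_le hA hz hx hxu.le hu.2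
  · intro h
    have hx' : (x : ℝ) ≠ 0 := ne_of_gt hx
    have hmem : x⁻¹ • z ∈ A := (mem_smul_set_iff_inv_smul_mem₀ hx' A z).1 h
    have hcont : ContinuousAt (fun u : ℝ => u⁻¹ • z) x :=
      (continuousAt_inv₀ hx').smul continuousAt_const
    have hnb : (fun u : ℝ => u⁻¹ • z) ⁻¹' A ∈ nhds x :=
      hcont.preimage_mem_nhds (hA.2.1.mem_nhds hmem)
    obtain ⟨ε, hε, hball⟩ := Metric.mem_nhds_iff.1 hnb
    have hu : x + ε / 2 ∈ {u : ℝ | 0 < u ∧ z ∈ u • A} := by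
      refine ⟨by linarith, ?_⟩
      rw [mem_smul_set_iff_inv_smul_mem₀ (ne_of_gt (by linarith : (0:ℝ) < x + ε / 2))]
      apply hball
      rw [Metric.mem_ball, Real.dist_eq, show x + ε / 2 - x = ε / 2 by ring,
        abs_of_pos (by linarith)]
      linarith
    have := le_csSup (bddAbove_scaleSet hA z) hu
    rw [YofA]
    linarith

lemma measurable_YofA_comp {Ω : Type*} [MeasurableSpace Ω] {A : Set (Fin d → ℝ)} (hA : MemR A)
    {X : Ω → Fin d → ℝ} (hX : Measurable X) (hXn : ∀ ω, 0 ≤ X ω) :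
    Measurable fun ω => YofA A (X ω) := by
  apply measurable_of_Ioi
  intro x
  rcases lt_trichotomy x 0 with hx | hx | hx
  · have : (fun ω => YofA A (X ω)) ⁻¹' Ioi x = univ :=
      eq_univ_of_forall fun ω => lt_of_lt_of_le hx (YofA_nonneg _)
    rw [this]; exact MeasurableSet.univ
  · subst hx
    have heq : (fun ω => YofA A (X ω)) ⁻¹' Ioi 0 = ⋃ n : ℕ, X ⁻¹' ((((n : ℝ) + 1)⁻¹) • A) := by
      ext ω
      simp only [mem_preimage, mem_Ioi, mem_iUnion]
      constructor
      · intro h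
        have hS : {u : ℝ | 0 < u ∧ X ω ∈ u • A}.Nonempty := by
          by_contra hne
          rw [not_nonempty_iff_eq_empty] at hne
          rw [YofA, hne, Real.sSup_empty] at h
          exact lt_irrefl 0 h
        obtain ⟨u, hu0, huA⟩ := hS
        obtain ⟨n, hn⟩ := exists_nat_gt u⁻¹
        have hn1 : (0:ℝ) < (n : ℝ) + 1 := by positivity
        have h2 : ((n:ℝ) + 1)⁻¹ ≤ u := by
          rw [← one_div, div_le_iff₀ hn1]
          calc (1:ℝ) = u * u⁻¹ := (mul_inv_cancel₀ hu0.ne').symm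
            _ ≤ u * ((n:ℝ) + 1) := mul_le_mul_of_nonneg_left (by linarith) hu0.le
        exact ⟨n, mem_smul_set_of_le hA (hXn ω) (by positivity) h2 huA⟩
      · rintro ⟨n, hn⟩
        have hn1 : (0:ℝ) < ((n : ℝ) + 1)⁻¹ := by positivity
        exact lt_of_lt_of_le hn1 (le_csSup (bddAbove_scaleSet hA _) ⟨hn1, hn⟩)
    rw [heq]
    exact MeasurableSet.iUnion fun n =>
      hX ((hA.2.1.smul₀ (by positivity : ((n : ℝ) + 1)⁻¹ ≠ 0)).measurableSet)
  · have heq : (fun ω => YofA A (X ω)) ⁻¹' Ioi x = X ⁻¹' (x • A) := by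
      ext ω
      simp only [mem_preimage, mem_Ioi]
      exact YofA_gt_iff hA (hXn ω) hx
    rw [heq]
    exact hX ((hA.2.1.smul₀ (ne_of_gt hx)).measurableSet)

lemma map_YofA_Ioi {Ω : Type*} [MeasurableSpace Ω] (P : Measure Ω) {A : Set (Fin d → ℝ)}
    (hA : MemR A) {X : Ω → Fin d → ℝ} (hX : Measurable X) (hXn : ∀ ω, 0 ≤ X ω)
    {x : ℝ} (hx : 0 < x) :
    (P.map fun ω => YofA A (X ω)) (Ioi x) = P (X ⁻¹' (x • A)) := by
  rw [Measure.map_apply (measurable_YofA_comp hA hX hXn) measurableSet_Ioi]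
  congr 1
  ext ω
  simp only [mem_preimage, mem_Ioi]
  exact YofA_gt_iff hA (hXn ω) hx

lemma map_YofA_Iio {Ω : Type*} [MeasurableSpace Ω] (P : Measure Ω) {A : Set (Fin d → ℝ)}
    (hA : MemR A) {X : Ω → Fin d → ℝ} (hX : Measurable X) (hXn : ∀ ω, 0 ≤ X ω) :
    (P.map fun ω => YofA A (X ω)) (Iio 0) = 0 := by
  rw [Measure.map_apply (measurable_YofA_comp hA hX hXn) measurableSet_Iio]
  have : (fun ω => YofA A (X ω)) ⁻¹' Iio 0 = ∅ :=
    eq_empty_iff_forall_notMem.2 fun ω h => (not_lt.2 (YofA_nonneg _)) h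
  rw [this, measure_empty]

end Geometry

section MeasureAux

lemma tail_meas (μ : Measure ℝ) (x : ℝ) : Measurable fun t : ℝ => μ (Ioi (x - t)) := by
  have hm : Monotone fun t : ℝ => μ (Ioi (x - t)) := fun a b hab =>
    measure_mono (Ioi_subset_Ioi (by linarith))
  exact hm.measurable

lemma tailmax_meas (ν : Measure ℝ) (T x : ℝ) :
    Measurable fun t : ℝ => ν (Ioi (max T (x - t))) := by
  have hm : Monotone fun t : ℝ => ν (Ioi (max T (x - t))) := fun a b hab =>
    measure_mono (Ioi_subset_Ioi (max_le_max le_rfl (by linarith)))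
  exact hm.measurable

lemma convAdd_Ioi (μ ν : Measure ℝ) [SFinite μ] [SFinite ν] (x : ℝ) :
    convAdd μ ν (Ioi x) = ∫⁻ t, ν (Ioi (x - t)) ∂μ := by
  rw [convAdd, Measure.map_apply (f := fun p : ℝ × ℝ => p.1 + p.2) (measurable_fst.add measurable_snd) measurableSet_Ioi,
    Measure.prod_apply (s := (fun p : ℝ × ℝ => p.1 + p.2) ⁻¹' Ioi x) ((measurable_fst.add measurable_snd) measurableSet_Ioi)]
  apply lintegral_congr
  intro t
  congr 1
  ext b
  simp only [mem_preimage, mem_Ioi]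
  constructor <;> intro h <;> linarith

lemma prodS_meas (T x : ℝ) :
    MeasurableSet {p : ℝ × ℝ | T < p.1 ∧ T < p.2 ∧ x < p.1 + p.2} := by
  have h1 : MeasurableSet {p : ℝ × ℝ | T < p.1} :=
    measurableSet_lt measurable_const measurable_fst
  have h2 : MeasurableSet {p : ℝ × ℝ | T < p.2} :=
    measurableSet_lt measurable_const measurable_snd
  have h3 : MeasurableSet {p : ℝ × ℝ | x < p.1 + p.2} :=
    measurableSet_lt measurable_const (measurable_fst.add measurable_snd)
  exact h1.inter (h2.inter h3)

lemma prod_tail_repr (μ ν : Measure ℝ) [SFinite μ] [SFinite ν] (T x : ℝ) :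
    (μ.prod ν) {p : ℝ × ℝ | T < p.1 ∧ T < p.2 ∧ x < p.1 + p.2}
      = ∫⁻ t in Ioi T, ν (Ioi (max T (x - t))) ∂μ := by
  rw [Measure.prod_apply (prodS_meas T x)]
  have hslice : ∀ t : ℝ,
      ν (Prod.mk t ⁻¹' {p : ℝ × ℝ | T < p.1 ∧ T < p.2 ∧ x < p.1 + p.2})
        = (Ioi T).indicator (fun t => ν (Ioi (max T (x - t)))) t := by
    intro t
    by_cases ht : T < t
    · rw [indicator_of_mem (mem_Ioi.2 ht)]
      congr 1
      ext b
      simp only [mem_preimage, mem_setOf_eq, mem_Ioi, max_lt_iff]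
      constructor
      · rintro ⟨-, h2, h3⟩; exact ⟨h2, by linarith⟩
      · rintro ⟨h2, h3⟩; exact ⟨ht, h2, by linarith⟩
    · rw [indicator_of_notMem (by simpa using ht)]
      have : Prod.mk t ⁻¹' {p : ℝ × ℝ | T < p.1 ∧ T < p.2 ∧ x < p.1 + p.2} = ∅ := by
        ext b
        simp only [mem_preimage, mem_setOf_eq, mem_empty_iff_false, iff_false]
        rintro ⟨h1, -⟩; exact ht h1
      rw [this, measure_empty]
  rw [lintegral_congr hslice]
  exact lintegral_indicator measurableSet_Ioi _

lemma prod_swap_S (μ ν : Measure ℝ) [SFinite μ] [SFinite ν] (T x : ℝ) :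
    (μ.prod ν) {p : ℝ × ℝ | T < p.1 ∧ T < p.2 ∧ x < p.1 + p.2}
      = (ν.prod μ) {p : ℝ × ℝ | T < p.1 ∧ T < p.2 ∧ x < p.1 + p.2} := by
  conv_rhs => rw [← Measure.prod_swap]
  rw [Measure.map_apply measurable_swap (prodS_meas T x)]
  congr 1
  ext p
  simp only [mem_preimage, Prod.fst_swap, Prod.snd_swap, mem_setOf_eq]
  constructor <;> rintro ⟨h1, h2, h3⟩ <;> exact ⟨h2, h1, by linarith⟩

lemma lintegral_split3 (μ : Measure ℝ) (hμ0 : μ (Iio 0) = 0) (f : ℝ → ℝ≥0∞)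
    {y x : ℝ} (h0y : 0 ≤ y) (hyx : y ≤ x) :
    ∫⁻ t, f t ∂μ
      = ∫⁻ t in Icc 0 y, f t ∂μ + ∫⁻ t in Ioc y x, f t ∂μ + ∫⁻ t in Ioi x, f t ∂μ := by
  have h1 : ∫⁻ t, f t ∂μ = ∫⁻ t in Ici 0, f t ∂μ := by
    rw [← lintegral_add_compl f (measurableSet_Ici (a := (0:ℝ))), compl_Ici,
      setLIntegral_measure_zero _ _ hμ0, add_zero]
  rw [h1, ← Icc_union_Ioi_eq_Ici (le_trans h0y hyx), ← Icc_union_Ioc_eq_Icc h0y hyx]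
  rw [lintegral_union measurableSet_Ioi (by
    rw [Icc_union_Ioc_eq_Icc h0y hyx]
    exact Set.disjoint_left.2 fun t ht ht' => absurd ht.2 (not_le.2 ht'))]
  rw [lintegral_union measurableSet_Ioc
    (Set.disjoint_left.2 fun t ht ht' => absurd ht.2 (not_le.2 ht'.1))]

lemma tailR_antitone (μ : Measure ℝ) [IsFiniteMeasure μ] : Antitone (tailR μ) := fun a b hab =>
  ENNReal.toReal_mono (measure_ne_top μ _) (measure_mono (Ioi_subset_Ioi hab))

lemma Ici_zero_prob (μ : Measure ℝ) [IsProbabilityMeasure μ] (hμ0 : μ (Iio 0) = 0) :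
    μ (Ici 0) = 1 := by
  rw [← compl_Iio, prob_compl_eq_one_sub measurableSet_Iio, hμ0, tsub_zero]

lemma tendsto_tailR_zero (μ : Measure ℝ) [IsProbabilityMeasure μ] :
    Tendsto (tailR μ) atTop (𝓝 0) := by
  have h1 : Tendsto (fun x : ℝ => (μ (Iic x)).toReal) atTop (𝓝 1) := by
    have h := (ENNReal.tendsto_toReal (a := μ univ) (measure_ne_top μ univ)).comp
      (tendsto_measure_Iic_atTop μ)
    simpa [measure_univ, Function.comp_def] using h
  have h2 : ∀ x : ℝ, tailR μ x = 1 - (μ (Iic x)).toReal := by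
    intro x
    have hdisj : μ (Iic x) + μ (Ioi x) = 1 := by
      rw [← measure_union (Iic_disjoint_Ioi le_rfl) measurableSet_Ioi, Iic_union_Ioi,
        measure_univ]
    have h3 : (μ (Iic x)).toReal + (μ (Ioi x)).toReal = 1 := by
      rw [← ENNReal.toReal_add (measure_ne_top μ _) (measure_ne_top μ _), hdisj,
        ENNReal.toReal_one]
    simp only [tailR]; linarith
  have h4 : Tendsto (fun x : ℝ => 1 - (μ (Iic x)).toReal) atTop (𝓝 (1 - 1)) :=
    tendsto_const_nhds.sub h1
  rw [sub_self] at h4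
  exact Tendsto.congr (fun x => (h2 x).symm) h4

lemma tailR_le_one (μ : Measure ℝ) [IsProbabilityMeasure μ] (x : ℝ) : tailR μ x ≤ 1 := by
  simp only [tailR]
  have h := ENNReal.toReal_mono (measure_ne_top μ univ) (measure_mono (subset_univ (Ioi x)))
  simpa [measure_univ] using h

lemma tendsto_IccToReal (μ : Measure ℝ) [IsProbabilityMeasure μ] (hμ0 : μ (Iio 0) = 0) :
    Tendsto (fun x : ℝ => (μ (Icc 0 x)).toReal) atTop (𝓝 1) := by
  have h1 : ∀ᶠ x : ℝ in atTop, 1 - tailR μ x = (μ (Icc 0 x)).toReal := by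
    filter_upwards [eventually_ge_atTop (0:ℝ)] with x hx
    have hsum : μ (Icc 0 x) + μ (Ioi x) = 1 := by
      have hd : Disjoint (Icc (0:ℝ) x) (Ioi x) :=
        Set.disjoint_left.2 fun t ht ht' => absurd ht.2 (not_le.2 ht')
      rw [← measure_union hd measurableSet_Ioi, Icc_union_Ioi_eq_Ici hx, Ici_zero_prob μ hμ0]
    have h3 : (μ (Icc 0 x)).toReal + (μ (Ioi x)).toReal = 1 := by
      rw [← ENNReal.toReal_add (measure_ne_top μ _) (measure_ne_top μ _), hsum,
        ENNReal.toReal_one]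
    simp only [tailR]; linarith
  have h4 : Tendsto (fun x : ℝ => 1 - tailR μ x) atTop (𝓝 (1 - 0)) :=
    tendsto_const_nhds.sub (tendsto_tailR_zero μ)
  rw [sub_zero] at h4
  exact Tendsto.congr' h1 h4

lemma toReal_Ioc (μ : Measure ℝ) [IsProbabilityMeasure μ] {a b : ℝ} (hab : a ≤ b) :
    (μ (Ioc a b)).toReal = tailR μ a - tailR μ b := by
  have hsum : μ (Ioc a b) + μ (Ioi b) = μ (Ioi a) := by
    have hd : Disjoint (Ioc a b) (Ioi b) :=
      Set.disjoint_left.2 fun t ht ht' => absurd ht.2 (not_le.2 ht')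
    rw [← measure_union hd measurableSet_Ioi, Ioc_union_Ioi_eq_Ioi hab]
  have h := congrArg ENNReal.toReal hsum
  rw [ENNReal.toReal_add (measure_ne_top μ _) (measure_ne_top μ _)] at h
  simp only [tailR]; linarith

end MeasureAux

section Core

lemma longtail_of_subexp (V : Measure ℝ) [IsProbabilityMeasure V] (hVsub : IsSubexponential V)
    {T : ℝ} (hT : 0 < T) :
    Tendsto (fun x => tailR V (x - T) / tailR V x) atTop (𝓝 1) := by
  obtain ⟨hV0, hVpos, hVconv⟩ := hVsub
  have hv_pos : ∀ x : ℝ, 0 < tailR V x := fun x =>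
    ENNReal.toReal_pos (hVpos x).ne' (measure_ne_top V _)
  haveI : IsProbabilityMeasure (convAdd V V) :=
    Measure.isProbabilityMeasure_map ((measurable_fst.add measurable_snd).aemeasurable)
  have hlow : ∀ x : ℝ, 1 ≤ tailR V (x - T) / tailR V x := fun x =>
    (one_le_div (hv_pos x)).2 (tailR_antitone V (by linarith))
  -- key integral estimate
  have hkey : ∀ x : ℝ, T ≤ x →
      tailR V (x - T) * (V (Ioc T x)).toReal + tailR V x * (V (Icc 0 T)).toReal + tailR V x
        ≤ (convAdd V V (Ioi x)).toReal := by
    intro x hTx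
    have hEN : V (Ioi (x - T)) * V (Ioc T x) + V (Ioi x) * V (Icc 0 T) + V (Ioi x)
        ≤ convAdd V V (Ioi x) := by
      rw [convAdd_Ioi V V x, lintegral_split3 V hV0 _ hT.le hTx]
      have p1 : V (Ioi x) * V (Icc 0 T) ≤ ∫⁻ t in Icc 0 T, V (Ioi (x - t)) ∂V := by
        rw [← setLIntegral_const (Icc 0 T) (V (Ioi x))]
        exact setLIntegral_mono (tail_meas V x) fun t ht =>
          measure_mono (Ioi_subset_Ioi (by linarith [ht.1]))
      have p2 : V (Ioi (x - T)) * V (Ioc T x) ≤ ∫⁻ t in Ioc T x, V (Ioi (x - t)) ∂V := by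
        rw [← setLIntegral_const (Ioc T x) (V (Ioi (x - T)))]
        exact setLIntegral_mono (tail_meas V x) fun t ht =>
          measure_mono (Ioi_subset_Ioi (by linarith [ht.1]))
      have p3 : V (Ioi x) ≤ ∫⁻ t in Ioi x, V (Ioi (x - t)) ∂V := by
        calc V (Ioi x) = 1 * V (Ioi x) := (one_mul _).symm
          _ = ∫⁻ _ in Ioi x, 1 ∂V := (setLIntegral_const (Ioi x) 1).symm
          _ ≤ ∫⁻ t in Ioi x, V (Ioi (x - t)) ∂V := by
              refine setLIntegral_mono (tail_meas V x) fun t ht => ?_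
              have hsub : Ici (0:ℝ) ⊆ Ioi (x - t) := fun b hb =>
                lt_of_lt_of_le (show x - t < 0 by simp only [mem_Ioi] at ht; linarith) hb
              calc (1:ℝ≥0∞) = V (Ici 0) := (Ici_zero_prob V hV0).symm
                _ ≤ V (Ioi (x - t)) := measure_mono hsub
      calc V (Ioi (x - T)) * V (Ioc T x) + V (Ioi x) * V (Icc 0 T) + V (Ioi x)
          = V (Ioi x) * V (Icc 0 T) + V (Ioi (x - T)) * V (Ioc T x) + V (Ioi x) := by ring
        _ ≤ _ := add_le_add (add_le_add p1 p2) p3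
    have h := ENNReal.toReal_mono (measure_ne_top (convAdd V V) _) hEN
    rw [ENNReal.toReal_add (ENNReal.add_ne_top.2
        ⟨ENNReal.mul_ne_top (measure_ne_top V _) (measure_ne_top V _),
         ENNReal.mul_ne_top (measure_ne_top V _) (measure_ne_top V _)⟩) (measure_ne_top V _),
      ENNReal.toReal_add (ENNReal.mul_ne_top (measure_ne_top V _) (measure_ne_top V _))
        (ENNReal.mul_ne_top (measure_ne_top V _) (measure_ne_top V _)),
      ENNReal.toReal_mul, ENNReal.toReal_mul] at h
    simp only [tailR]
    linarith [h]
  -- rewrite Ioc measure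
  have hVT : (1:ℝ) = (V (Icc 0 T)).toReal + tailR V T := by
    have hsum : V (Icc 0 T) + V (Ioi T) = 1 := by
      have hd : Disjoint (Icc (0:ℝ) T) (Ioi T) :=
        Set.disjoint_left.2 fun t ht ht' => absurd ht.2 (not_le.2 ht')
      rw [← measure_union hd measurableSet_Ioi, Icc_union_Ioi_eq_Ici hT.le, Ici_zero_prob V hV0]
    have h3 : (V (Icc 0 T)).toReal + (V (Ioi T)).toReal = 1 := by
      rw [← ENNReal.toReal_add (measure_ne_top V _) (measure_ne_top V _), hsum,
        ENNReal.toReal_one]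
    simp only [tailR]; linarith
  have hup : ∀ᶠ x : ℝ in atTop, tailR V (x - T) / tailR V x ≤
      ((convAdd V V (Ioi x)).toReal / tailR V x - (V (Icc 0 T)).toReal - 1)
        / (tailR V T - tailR V x) := by
    have hev1 : ∀ᶠ x : ℝ in atTop, tailR V x < tailR V T :=
      (tendsto_tailR_zero V).eventually_lt_const (hv_pos T)
    filter_upwards [hev1, eventually_ge_atTop T] with x h1 h2
    have h3 := hkey x h2
    rw [toReal_Ioc V h2] at h3
    have h4 : 0 < tailR V T - tailR V x := by linarith
    rw [div_le_div_iff₀ (hv_pos x) h4]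
    have h5 : ((convAdd V V (Ioi x)).toReal / tailR V x - (V (Icc 0 T)).toReal - 1) * tailR V x
        = (convAdd V V (Ioi x)).toReal - (V (Icc 0 T)).toReal * tailR V x - tailR V x := by
      rw [sub_mul, sub_mul, div_mul_cancel₀ _ (hv_pos x).ne', one_mul]
    ring_nf at h3 h5 ⊢
    linarith [h3, h5]
  have hlim : Tendsto (fun x => ((convAdd V V (Ioi x)).toReal / tailR V x
      - (V (Icc 0 T)).toReal - 1) / (tailR V T - tailR V x)) atTop (𝓝 1) := by
    have h1 : Tendsto (fun x => (convAdd V V (Ioi x)).toReal / tailR V x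
        - (V (Icc 0 T)).toReal - 1) atTop (𝓝 (2 - (V (Icc 0 T)).toReal - 1)) :=
      (hVconv.sub tendsto_const_nhds).sub tendsto_const_nhds
    have h2 : Tendsto (fun x => tailR V T - tailR V x) atTop (𝓝 (tailR V T - 0)) :=
      tendsto_const_nhds.sub (tendsto_tailR_zero V)
    rw [sub_zero] at h2
    have h3 := h1.div h2 (ne_of_gt (hv_pos T))
    have h4 : (2 - (V (Icc 0 T)).toReal - 1) / tailR V T = 1 := by
      rw [show 2 - (V (Icc 0 T)).toReal - 1 = tailR V T by linarith [hVT]]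
      exact div_self (ne_of_gt (hv_pos T))
    rwa [h4] at h3
  exact tendsto_of_tendsto_of_tendsto_of_le_of_le' tendsto_const_nhds hlim
    (Eventually.of_forall hlow) hup

end Core

section CoreTransfer

lemma core_transfer (V W : Measure ℝ) [IsProbabilityMeasure V] [IsProbabilityMeasure W]
    (hW0 : W (Iio 0) = 0) (hVsub : IsSubexponential V)
    {c₀ : ℝ} (hc₀ : 0 < c₀)
    (hequiv : Tendsto (fun x => tailR V x / tailR W x) atTop (𝓝 c₀)) :
    IsSubexponential W := by
  have hV0 := hVsub.1
  have hVpos := hVsub.2.1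
  have hVconv := hVsub.2.2
  have hv_pos : ∀ x : ℝ, 0 < tailR V x := fun x =>
    ENNReal.toReal_pos (hVpos x).ne' (measure_ne_top V _)
  haveI : IsProbabilityMeasure (convAdd V V) :=
    Measure.isProbabilityMeasure_map ((measurable_fst.add measurable_snd).aemeasurable)
  haveI : IsProbabilityMeasure (convAdd W W) :=
    Measure.isProbabilityMeasure_map ((measurable_fst.add measurable_snd).aemeasurable)
  have hWpos : ∀ x : ℝ, 0 < W (Ioi x) := by
    intro x
    by_contra h
    have hx0 : W (Ioi x) = 0 := le_antisymm (not_lt.mp h) zero_le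
    have hzero : (fun t : ℝ => tailR V t / tailR W t) =ᶠ[atTop] fun _ => (0:ℝ) := by
      filter_upwards [eventually_ge_atTop x] with t ht
      have h1 : W (Ioi t) = 0 :=
        le_antisymm (hx0 ▸ measure_mono (Ioi_subset_Ioi ht)) zero_le
      simp only [tailR, h1, ENNReal.toReal_zero, div_zero]
    have h2 : Tendsto (fun t : ℝ => tailR V t / tailR W t) atTop (𝓝 0) :=
      Tendsto.congr' hzero.symm tendsto_const_nhds
    exact hc₀.ne' (tendsto_nhds_unique hequiv h2)
  have hw_pos : ∀ x : ℝ, 0 < tailR W x := fun x =>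
    ENNReal.toReal_pos (hWpos x).ne' (measure_ne_top W _)
  refine ⟨hW0, hWpos, ?_⟩
  have hwv : Tendsto (fun x => tailR W x / tailR V x) atTop (𝓝 c₀⁻¹) := by
    have h := hequiv.inv₀ (ne_of_gt hc₀)
    exact h.congr fun x => inv_div _ _
  -- W is long-tailed
  have hWlt : ∀ T : ℝ, 0 < T →
      Tendsto (fun x => tailR W (x - T) / tailR W x) atTop (𝓝 1) := by
    intro T hT
    have hsubT : Tendsto (fun x : ℝ => x - T) atTop atTop :=
      (tendsto_atTop_add_const_right atTop (-T) tendsto_id).congr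
        fun x => (sub_eq_add_neg x T).symm
    have h2 : Tendsto (fun x : ℝ => tailR W (x - T) / tailR V (x - T)) atTop (𝓝 c₀⁻¹) :=
      hwv.comp hsubT
    have h3 := longtail_of_subexp V hVsub hT
    have h4 := h2.mul (h3.mul hequiv)
    rw [show c₀⁻¹ * (1 * c₀) = 1 by field_simp] at h4
    refine h4.congr fun x => ?_
    have a1 := (hv_pos (x - T)).ne'
    have a2 := (hv_pos x).ne'
    have a3 := (hw_pos x).ne'
    field_simp
  -- domination of W-tail by V-tail
  obtain ⟨T₀, hT₀⟩ : ∃ T₀ : ℝ, ∀ t : ℝ, T₀ ≤ t → tailR W t ≤ 2 / c₀ * tailR V t := by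
    have hlt : c₀⁻¹ < 2 / c₀ := by
      rw [inv_eq_one_div, div_lt_div_iff₀ hc₀ hc₀]
      nlinarith
    have h1 : ∀ᶠ t : ℝ in atTop, tailR W t / tailR V t < 2 / c₀ :=
      hwv.eventually_lt_const hlt
    obtain ⟨T₀, h⟩ := eventually_atTop.1 h1
    refine ⟨T₀, fun t ht => ?_⟩
    have h2 := h t ht
    rw [div_lt_iff₀ (hv_pos t)] at h2
    linarith
  have hdomE : ∀ t : ℝ, T₀ ≤ t → W (Ioi t) ≤ ENNReal.ofReal (2 / c₀) * V (Ioi t) := by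
    intro t ht
    have h := hT₀ t ht
    simp only [tailR] at h
    rw [← ENNReal.ofReal_toReal (measure_ne_top W (Ioi t)),
      ← ENNReal.ofReal_toReal (measure_ne_top V (Ioi t)),
      ← ENNReal.ofReal_mul (by positivity : (0:ℝ) ≤ 2 / c₀)]
    exact ENNReal.ofReal_le_ofReal h
  -- main upper estimate
  have hmain : ∀ T : ℝ, 0 < T → T₀ ≤ T → ∀ x : ℝ, 2 * T < x →
      (convAdd W W (Ioi x)).toReal / tailR W x ≤
        2 * (tailR W (x - T) / tailR W x) + (2 / c₀) ^ 2 *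
          (((convAdd V V (Ioi x)).toReal / tailR V x - 2 * (V (Icc 0 T)).toReal)
            * (tailR V x / tailR W x)) := by
    intro T hT hTT₀ x hx
    have hTx : T ≤ x - T := by linarith
    have hxT : x - T ≤ x := by linarith
    have hwx : (0:ℝ) < (W (Ioi x)).toReal := hw_pos x
    have hvx : (0:ℝ) < (V (Ioi x)).toReal := hv_pos x
    have hsplit : convAdd W W (Ioi x)
        = ∫⁻ t in Icc 0 T, W (Ioi (x - t)) ∂W + ∫⁻ t in Ioc T (x - T), W (Ioi (x - t)) ∂W
          + (∫⁻ t in Ioc (x - T) x, W (Ioi (x - t)) ∂W + ∫⁻ t in Ioi x, W (Ioi (x - t)) ∂W) := by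
      rw [convAdd_Ioi W W x, lintegral_split3 W hW0 _ hT.le hTx]
      congr 1
      have hd : Disjoint (Ioc (x - T) x) (Ioi x) :=
        Set.disjoint_left.2 fun t ht ht' => absurd ht.2 (not_le.2 ht')
      rw [← Ioc_union_Ioi_eq_Ioi hxT, lintegral_union measurableSet_Ioi hd]
    have hJ : 2 * (V (Ioi x) * V (Icc 0 T))
        + (V.prod V) {p : ℝ × ℝ | T < p.1 ∧ T < p.2 ∧ x < p.1 + p.2}
        ≤ convAdd V V (Ioi x) := by
      have hm1 : MeasurableSet (Icc (0:ℝ) T ×ˢ Ioi x) :=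
        measurableSet_Icc.prod measurableSet_Ioi
      have hd12 : Disjoint (Ioi x ×ˢ Icc (0:ℝ) T) (Icc (0:ℝ) T ×ˢ Ioi x) := by
        rw [Set.disjoint_left]
        rintro ⟨p1, p2⟩ ⟨h1, h2⟩ ⟨h3, h4⟩
        simp only [mem_Ioi, mem_Icc] at h1 h3
        linarith [h3.2]
      have hdUS : Disjoint ((Ioi x ×ˢ Icc (0:ℝ) T) ∪ (Icc (0:ℝ) T ×ˢ Ioi x))
          {p : ℝ × ℝ | T < p.1 ∧ T < p.2 ∧ x < p.1 + p.2} := by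
        rw [Set.disjoint_union_left]
        constructor
        · rw [Set.disjoint_left]
          rintro ⟨p1, p2⟩ ⟨h1, h2⟩ ⟨h3, h4, h5⟩
          simp only [mem_Icc] at h2
          exact absurd h4 (not_lt.2 h2.2)
        · rw [Set.disjoint_left]
          rintro ⟨p1, p2⟩ ⟨h1, h2⟩ ⟨h3, h4, h5⟩
          simp only [mem_Icc] at h1
          exact absurd h3 (not_lt.2 h1.2)
      have hsubE : (Ioi x ×ˢ Icc (0:ℝ) T) ∪ (Icc (0:ℝ) T ×ˢ Ioi x)
          ∪ {p : ℝ × ℝ | T < p.1 ∧ T < p.2 ∧ x < p.1 + p.2}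
            ⊆ (fun p : ℝ × ℝ => p.1 + p.2) ⁻¹' Ioi x := by
        rintro ⟨p1, p2⟩ hp
        rcases hp with (hp | hp) | hp
        · simp only [mem_prod, mem_Ioi, mem_Icc] at hp
          simp only [mem_preimage, mem_Ioi]
          linarith [hp.1, hp.2.1]
        · simp only [mem_prod, mem_Ioi, mem_Icc] at hp
          simp only [mem_preimage, mem_Ioi]
          linarith [hp.1.1, hp.2]
        · simp only [mem_setOf_eq] at hp
          simp only [mem_preimage, mem_Ioi]
          exact hp.2.2
      calc 2 * (V (Ioi x) * V (Icc 0 T))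
            + (V.prod V) {p : ℝ × ℝ | T < p.1 ∧ T < p.2 ∧ x < p.1 + p.2}
          = ((V.prod V) (Ioi x ×ˢ Icc 0 T) + (V.prod V) (Icc 0 T ×ˢ Ioi x))
            + (V.prod V) {p : ℝ × ℝ | T < p.1 ∧ T < p.2 ∧ x < p.1 + p.2} := by
            rw [Measure.prod_prod, Measure.prod_prod]
            ring
        _ = (V.prod V) ((Ioi x ×ˢ Icc 0 T) ∪ (Icc 0 T ×ˢ Ioi x))
            + (V.prod V) {p : ℝ × ℝ | T < p.1 ∧ T < p.2 ∧ x < p.1 + p.2} := by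
            rw [measure_union hd12 hm1]
        _ = (V.prod V) (((Ioi x ×ˢ Icc 0 T) ∪ (Icc 0 T ×ˢ Ioi x))
            ∪ {p : ℝ × ℝ | T < p.1 ∧ T < p.2 ∧ x < p.1 + p.2}) := by
            rw [measure_union hdUS (prodS_meas T x)]
        _ ≤ (V.prod V) ((fun p : ℝ × ℝ => p.1 + p.2) ⁻¹' Ioi x) := measure_mono hsubE
        _ = convAdd V V (Ioi x) := by
            rw [convAdd, Measure.map_apply (f := fun p : ℝ × ℝ => p.1 + p.2) (measurable_fst.add measurable_snd) measurableSet_Ioi]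
    have hb2 : ∫⁻ t in Ioc T (x - T), W (Ioi (x - t)) ∂W
        ≤ ENNReal.ofReal (2 / c₀) * ENNReal.ofReal (2 / c₀) *
          (V.prod V) {p : ℝ × ℝ | T < p.1 ∧ T < p.2 ∧ x < p.1 + p.2} := by
      have s1 : ∫⁻ t in Ioc T (x - T), W (Ioi (x - t)) ∂W
          ≤ ∫⁻ t in Ioc T (x - T), ENNReal.ofReal (2 / c₀) * V (Ioi (max T (x - t))) ∂W := by
        refine setLIntegral_mono (measurable_const.mul (tailmax_meas V T x)) fun t ht => ?_
        simp only [mem_Ioc] at ht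
        have hxt : T ≤ x - t := by linarith [ht.2]
        rw [max_eq_right hxt]
        exact hdomE _ (le_trans hTT₀ hxt)
      have s2 : ∫⁻ t in Ioc T (x - T), ENNReal.ofReal (2 / c₀) * V (Ioi (max T (x - t))) ∂W
          ≤ ∫⁻ t in Ioi T, ENNReal.ofReal (2 / c₀) * V (Ioi (max T (x - t))) ∂W :=
        lintegral_mono_set Ioc_subset_Ioi_self
      have s3 : ∫⁻ t in Ioi T, ENNReal.ofReal (2 / c₀) * V (Ioi (max T (x - t))) ∂W
          = ENNReal.ofReal (2 / c₀)
            * (W.prod V) {p : ℝ × ℝ | T < p.1 ∧ T < p.2 ∧ x < p.1 + p.2} := by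
        rw [lintegral_const_mul' _ _ ENNReal.ofReal_ne_top, prod_tail_repr W V T x]
      have s4 : (W.prod V) {p : ℝ × ℝ | T < p.1 ∧ T < p.2 ∧ x < p.1 + p.2}
          = ∫⁻ t in Ioi T, W (Ioi (max T (x - t))) ∂V := by
        rw [prod_swap_S W V T x, prod_tail_repr V W T x]
      have s5 : ∫⁻ t in Ioi T, W (Ioi (max T (x - t))) ∂V
          ≤ ENNReal.ofReal (2 / c₀) * ∫⁻ t in Ioi T, V (Ioi (max T (x - t))) ∂V := by
        rw [← lintegral_const_mul' _ _ ENNReal.ofReal_ne_top]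
        exact setLIntegral_mono (measurable_const.mul (tailmax_meas V T x)) fun t ht =>
          hdomE _ (le_trans hTT₀ (le_max_left _ _))
      have s6 : ∫⁻ t in Ioi T, V (Ioi (max T (x - t))) ∂V
          = (V.prod V) {p : ℝ × ℝ | T < p.1 ∧ T < p.2 ∧ x < p.1 + p.2} :=
        (prod_tail_repr V V T x).symm
      calc ∫⁻ t in Ioc T (x - T), W (Ioi (x - t)) ∂W
          ≤ ∫⁻ t in Ioc T (x - T), ENNReal.ofReal (2 / c₀) * V (Ioi (max T (x - t))) ∂W := s1
        _ ≤ ∫⁻ t in Ioi T, ENNReal.ofReal (2 / c₀) * V (Ioi (max T (x - t))) ∂W := s2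
        _ = ENNReal.ofReal (2 / c₀)
            * (W.prod V) {p : ℝ × ℝ | T < p.1 ∧ T < p.2 ∧ x < p.1 + p.2} := s3
        _ = ENNReal.ofReal (2 / c₀) * ∫⁻ t in Ioi T, W (Ioi (max T (x - t))) ∂V := by rw [s4]
        _ ≤ ENNReal.ofReal (2 / c₀)
            * (ENNReal.ofReal (2 / c₀) * ∫⁻ t in Ioi T, V (Ioi (max T (x - t))) ∂V) :=
            mul_le_mul_right s5 _
        _ = ENNReal.ofReal (2 / c₀) * ENNReal.ofReal (2 / c₀) *
            (V.prod V) {p : ℝ × ℝ | T < p.1 ∧ T < p.2 ∧ x < p.1 + p.2} := by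
            rw [s6, mul_assoc]
    have hb1 : ∫⁻ t in Icc 0 T, W (Ioi (x - t)) ∂W ≤ W (Ioi (x - T)) := by
      calc ∫⁻ t in Icc 0 T, W (Ioi (x - t)) ∂W
          ≤ ∫⁻ _ in Icc (0:ℝ) T, W (Ioi (x - T)) ∂W := by
            refine setLIntegral_mono measurable_const fun t ht => ?_
            simp only [mem_Icc] at ht
            exact measure_mono (Ioi_subset_Ioi (by linarith [ht.2]))
        _ = W (Ioi (x - T)) * W (Icc 0 T) := setLIntegral_const _ _
        _ ≤ W (Ioi (x - T)) * 1 := mul_le_mul_right prob_le_one _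
        _ = W (Ioi (x - T)) := mul_one _
    have hb3 : ∫⁻ t in Ioc (x - T) x, W (Ioi (x - t)) ∂W ≤ W (Ioc (x - T) x) := by
      calc ∫⁻ t in Ioc (x - T) x, W (Ioi (x - t)) ∂W
          ≤ ∫⁻ _ in Ioc (x - T) x, 1 ∂W :=
            setLIntegral_mono measurable_const fun t _ => prob_le_one
        _ = 1 * W (Ioc (x - T) x) := setLIntegral_const _ _
        _ = W (Ioc (x - T) x) := one_mul _
    have hb4 : ∫⁻ t in Ioi x, W (Ioi (x - t)) ∂W ≤ W (Ioi x) := by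
      calc ∫⁻ t in Ioi x, W (Ioi (x - t)) ∂W
          ≤ ∫⁻ _ in Ioi x, 1 ∂W := setLIntegral_mono measurable_const fun t _ => prob_le_one
        _ = 1 * W (Ioi x) := setLIntegral_const _ _
        _ = W (Ioi x) := one_mul _
    have hcomb : convAdd W W (Ioi x) ≤ W (Ioi (x - T))
        + ENNReal.ofReal (2 / c₀) * ENNReal.ofReal (2 / c₀) *
          (V.prod V) {p : ℝ × ℝ | T < p.1 ∧ T < p.2 ∧ x < p.1 + p.2}
        + (W (Ioc (x - T) x) + W (Ioi x)) := by
      rw [hsplit]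
      exact add_le_add (add_le_add hb1 hb2) (add_le_add hb3 hb4)
    have hfinJ : (V.prod V) {p : ℝ × ℝ | T < p.1 ∧ T < p.2 ∧ x < p.1 + p.2} ≠ ⊤ :=
      measure_ne_top _ _
    have hKK : ENNReal.ofReal (2 / c₀) * ENNReal.ofReal (2 / c₀) *
        (V.prod V) {p : ℝ × ℝ | T < p.1 ∧ T < p.2 ∧ x < p.1 + p.2} ≠ ⊤ :=
      ENNReal.mul_ne_top (ENNReal.mul_ne_top ENNReal.ofReal_ne_top ENNReal.ofReal_ne_top) hfinJ
    have hne1 : W (Ioi (x - T)) + ENNReal.ofReal (2 / c₀) * ENNReal.ofReal (2 / c₀) *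
        (V.prod V) {p : ℝ × ℝ | T < p.1 ∧ T < p.2 ∧ x < p.1 + p.2} ≠ ⊤ :=
      ENNReal.add_ne_top.2 ⟨measure_ne_top _ _, hKK⟩
    have hne2 : W (Ioc (x - T) x) + W (Ioi x) ≠ ⊤ :=
      ENNReal.add_ne_top.2 ⟨measure_ne_top _ _, measure_ne_top _ _⟩
    have hreal := ENNReal.toReal_mono (ENNReal.add_ne_top.2 ⟨hne1, hne2⟩) hcomb
    rw [ENNReal.toReal_add hne1 hne2, ENNReal.toReal_add (measure_ne_top _ _) hKK,
      ENNReal.toReal_add (measure_ne_top _ _) (measure_ne_top _ _), ENNReal.toReal_mul,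
      ENNReal.toReal_mul,
      ENNReal.toReal_ofReal (by positivity : (0:ℝ) ≤ 2 / c₀), toReal_Ioc W hxT] at hreal
    have hJr := ENNReal.toReal_mono (measure_ne_top (convAdd V V) _) hJ
    rw [ENNReal.toReal_add (ENNReal.mul_ne_top ENNReal.ofNat_ne_top
        (ENNReal.mul_ne_top (measure_ne_top _ _) (measure_ne_top _ _))) hfinJ,
      ENNReal.toReal_mul, ENNReal.toReal_mul, ENNReal.toReal_ofNat] at hJr
    simp only [tailR] at hreal ⊢
    have hKr2 : (0:ℝ) ≤ (2 / c₀) * (2 / c₀) := by positivity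
    have h6 : ((V.prod V) {p : ℝ × ℝ | T < p.1 ∧ T < p.2 ∧ x < p.1 + p.2}).toReal
        ≤ (convAdd V V (Ioi x)).toReal
          - 2 * ((V (Ioi x)).toReal * (V (Icc 0 T)).toReal) := by linarith
    have hfin : (convAdd W W (Ioi x)).toReal ≤ 2 * (W (Ioi (x - T))).toReal
        + (2 / c₀) * (2 / c₀) * ((convAdd V V (Ioi x)).toReal
          - 2 * ((V (Ioi x)).toReal * (V (Icc 0 T)).toReal)) := by
      have h7 := mul_le_mul_of_nonneg_left h6 hKr2
      linarith
    rw [div_le_iff₀ hwx]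
    have hexp : (2 * ((W (Ioi (x - T))).toReal / (W (Ioi x)).toReal) + (2 / c₀) ^ 2 *
        (((convAdd V V (Ioi x)).toReal / (V (Ioi x)).toReal - 2 * (V (Icc 0 T)).toReal)
          * ((V (Ioi x)).toReal / (W (Ioi x)).toReal))) * (W (Ioi x)).toReal
        = 2 * (W (Ioi (x - T))).toReal + (2 / c₀) * (2 / c₀) * ((convAdd V V (Ioi x)).toReal
          - 2 * ((V (Ioi x)).toReal * (V (Icc 0 T)).toReal)) := by
      field_simp
    rw [hexp]
    exact hfin
  -- lower bound
  have hlowev : ∀ᶠ x : ℝ in atTop,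
      1 + (W (Icc 0 x)).toReal ≤ (convAdd W W (Ioi x)).toReal / tailR W x := by
    filter_upwards [eventually_ge_atTop (0:ℝ)] with x hx
    have hEN : W (Ioi x) * W (Icc 0 x) + W (Ioi x) ≤ convAdd W W (Ioi x) := by
      rw [convAdd_Ioi W W x, lintegral_split3 W hW0 _ hx le_rfl]
      have p1 : W (Ioi x) * W (Icc 0 x) ≤ ∫⁻ t in Icc 0 x, W (Ioi (x - t)) ∂W := by
        rw [← setLIntegral_const (Icc 0 x) (W (Ioi x))]
        refine setLIntegral_mono (tail_meas W x) fun t ht => ?_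
        simp only [mem_Icc] at ht
        exact measure_mono (Ioi_subset_Ioi (by linarith [ht.1]))
      have p3 : W (Ioi x) ≤ ∫⁻ t in Ioi x, W (Ioi (x - t)) ∂W := by
        calc W (Ioi x) = 1 * W (Ioi x) := (one_mul _).symm
          _ = ∫⁻ _ in Ioi x, 1 ∂W := (setLIntegral_const (Ioi x) 1).symm
          _ ≤ ∫⁻ t in Ioi x, W (Ioi (x - t)) ∂W := by
              refine setLIntegral_mono (tail_meas W x) fun t ht => ?_
              simp only [mem_Ioi] at ht
              have hsub : Ici (0:ℝ) ⊆ Ioi (x - t) := fun b hb =>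
                lt_of_lt_of_le (show x - t < 0 by linarith) hb
              calc (1:ℝ≥0∞) = W (Ici 0) := (Ici_zero_prob W hW0).symm
                _ ≤ W (Ioi (x - t)) := measure_mono hsub
      calc W (Ioi x) * W (Icc 0 x) + W (Ioi x)
          ≤ ∫⁻ t in Icc 0 x, W (Ioi (x - t)) ∂W
            + (∫⁻ t in Ioc x x, W (Ioi (x - t)) ∂W + ∫⁻ t in Ioi x, W (Ioi (x - t)) ∂W) :=
            add_le_add p1 (p3.trans le_add_self)
        _ = ∫⁻ t in Icc 0 x, W (Ioi (x - t)) ∂W + ∫⁻ t in Ioc x x, W (Ioi (x - t)) ∂W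
            + ∫⁻ t in Ioi x, W (Ioi (x - t)) ∂W := (add_assoc _ _ _).symm
    have hreal := ENNReal.toReal_mono (measure_ne_top (convAdd W W) _) hEN
    rw [ENNReal.toReal_add
      (ENNReal.mul_ne_top (measure_ne_top _ _) (measure_ne_top _ _)) (measure_ne_top _ _),
      ENNReal.toReal_mul] at hreal
    rw [le_div_iff₀ (hw_pos x)]
    simp only [tailR]
    have heq : (1 + (W (Icc 0 x)).toReal) * (W (Ioi x)).toReal
        = (W (Ioi x)).toReal * (W (Icc 0 x)).toReal + (W (Ioi x)).toReal := by ring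
    rw [heq]
    exact hreal
  have hlowlim : Tendsto (fun x : ℝ => 1 + (W (Icc 0 x)).toReal) atTop (𝓝 2) := by
    have h2 : Tendsto (fun x : ℝ => 1 + (W (Icc 0 x)).toReal) atTop (𝓝 (1 + 1)) :=
      tendsto_const_nhds.add (tendsto_IccToReal W hW0)
    norm_num at h2
    exact h2
  refine tendsto_order.2 ⟨fun b hb => ?_, fun b hb => ?_⟩
  · have hev := hlowlim.eventually_const_lt hb
    filter_upwards [hev, hlowev] with x h1 h2
    exact lt_of_lt_of_le h1 h2
  · have hTlim : Tendsto (fun T : ℝ => 2 * 1 + (2 / c₀) ^ 2 *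
        (((2:ℝ) - 2 * (V (Icc 0 T)).toReal) * c₀)) atTop
        (𝓝 (2 * 1 + (2 / c₀) ^ 2 * (((2:ℝ) - 2 * 1) * c₀))) :=
      tendsto_const_nhds.add (tendsto_const_nhds.mul
        ((tendsto_const_nhds.sub ((tendsto_IccToReal V hV0).const_mul 2)).mul
          tendsto_const_nhds))
    have hlimval : (2:ℝ) * 1 + (2 / c₀) ^ 2 * (((2:ℝ) - 2 * 1) * c₀) < b := by
      have hval : (2:ℝ) * 1 + (2 / c₀) ^ 2 * (((2:ℝ) - 2 * 1) * c₀) = 2 := by ring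
      rw [hval]
      exact hb
    obtain ⟨T, hTb, hT0, hTT₀⟩ : ∃ T : ℝ,
        (2 * 1 + (2 / c₀) ^ 2 * (((2:ℝ) - 2 * (V (Icc 0 T)).toReal) * c₀) < b)
          ∧ 0 < T ∧ T₀ ≤ T := by
      have e1 := hTlim.eventually_lt_const hlimval
      obtain ⟨T, h⟩ := (e1.and ((eventually_gt_atTop 0).and (eventually_ge_atTop T₀))).exists
      exact ⟨T, h.1, h.2.1, h.2.2⟩
    have hg : Tendsto (fun x : ℝ => 2 * (tailR W (x - T) / tailR W x) + (2 / c₀) ^ 2 *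
        (((convAdd V V (Ioi x)).toReal / tailR V x - 2 * (V (Icc 0 T)).toReal)
          * (tailR V x / tailR W x))) atTop
        (𝓝 (2 * 1 + (2 / c₀) ^ 2 * (((2:ℝ) - 2 * (V (Icc 0 T)).toReal) * c₀))) :=
      ((hWlt T hT0).const_mul 2).add (tendsto_const_nhds.mul
        ((hVconv.sub tendsto_const_nhds).mul hequiv))
    have hgev := hg.eventually_lt_const hTb
    filter_upwards [hgev, eventually_gt_atTop (2 * T)] with x h1 h2
    exact lt_of_le_of_lt (hmain T hT0 hTT₀ x h2) h1

end CoreTransfer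

/-- **Proposition 2.1(ii), subexponential case.** Let `A ∈ ℛ` and let `X, X'` be nonnegative
random vectors with distributions `F, G`. If `F ∈ 𝒮_A` and
`ℙ(X ∈ x·A)/ℙ(X' ∈ x·A) → c₀ ∈ (0,∞)`, then `G ∈ 𝒮_A`. -/
theorem subexp_transfer_of_tail_equiv
    {d : ℕ} {Ω₁ Ω₂ : Type*} [MeasurableSpace Ω₁] [MeasurableSpace Ω₂]
    (P₁ : Measure Ω₁) [IsProbabilityMeasure P₁] (P₂ : Measure Ω₂) [IsProbabilityMeasure P₂]
    (A : Set (Fin d → ℝ)) (hA : MemR A)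
    (X : Ω₁ → Fin d → ℝ) (hXmeas : Measurable X) (hXnonneg : ∀ ω, 0 ≤ X ω)
    (X' : Ω₂ → Fin d → ℝ) (hX'meas : Measurable X') (hX'nonneg : ∀ ω, 0 ≤ X' ω)
    (hsub : IsSubexponential (P₁.map fun ω => YofA A (X ω)))
    (c₀ : ℝ) (hc₀ : 0 < c₀)
    (hequiv : Tendsto
      (fun x : ℝ => (P₁ (X ⁻¹' (x • A))).toReal / (P₂ (X' ⁻¹' (x • A))).toReal)
      atTop (nhds c₀)) :
    IsSubexponential (P₂.map fun ω => YofA A (X' ω)) := by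
  haveI : IsProbabilityMeasure (P₁.map fun ω => YofA A (X ω)) :=
    Measure.isProbabilityMeasure_map (measurable_YofA_comp hA hXmeas hXnonneg).aemeasurable
  haveI : IsProbabilityMeasure (P₂.map fun ω => YofA A (X' ω)) :=
    Measure.isProbabilityMeasure_map (measurable_YofA_comp hA hX'meas hX'nonneg).aemeasurable
  refine core_transfer _ _ (map_YofA_Iio P₂ hA hX'meas hX'nonneg) hsub hc₀ ?_
  refine hequiv.congr' ?_
  filter_upwards [eventually_gt_atTop (0:ℝ)] with x hx
  simp only [tailR]
  rw [map_YofA_Ioi P₁ hA hXmeas hXnonneg hx, map_YofA_Ioi P₂ hA hX'meas hX'nonneg hx]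
end

section
/- Let A ∈ ℛ and let X ≥ 0 be a random vector in ℝ^d with distribution F ∈ 𝓛_A. Then for every a ∈ ℝ^d, ℙ(X ∈ x·A + a) / ℙ(X ∈ x·A) → 1 as x → ∞. -/
open MeasureTheory ProbabilityTheory Filter Set Topology
open scoped Pointwise ENNReal NNReal

namespace LSI


variable {d : ℕ}

lemma notMem_of_le {A : Set (Fin d → ℝ)} (hinc : IncreasingSet A)
    {w v : Fin d → ℝ} (hw : w ∉ A) (hvw : v ≤ w) : v ∉ A := by
  intro hv
  have h := hinc v hv (w - v) (by simpa [sub_nonneg] using hvw)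
  have h2 : v + (w - v) = w := by abel
  rw [h2] at h
  exact hw h

lemma smul_mem_of_one_le {A : Set (Fin d → ℝ)} (hconv : Convex ℝ Aᶜ)
    (h0 : (0 : Fin d → ℝ) ∉ closure A) {c : ℝ} (hc : 1 ≤ c)
    {w : Fin d → ℝ} (hw : w ∈ A) : c • w ∈ A := by
  by_contra h
  have h0' : (0 : Fin d → ℝ) ∈ Aᶜ := fun hh => h0 (subset_closure hh)
  have hc0 : (0:ℝ) < c := lt_of_lt_of_le one_pos hc
  have hcc := hconv h h0' (a := 1/c) (b := 1 - 1/c) (by positivity)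
      (by rw [sub_nonneg]; exact (div_le_one hc0).mpr hc) (by ring)
  have : w ∈ Aᶜ := by
    simpa [smul_smul, one_div, inv_mul_cancel₀ hc0.ne'] using hcc
  exact this hw

lemma key_shift {A : Set (Fin d → ℝ)} (hinc : IncreasingSet A) (hconv : Convex ℝ Aᶜ)
    {ε : ℝ} (hε : 0 < ε) (hball : Metric.closedBall (0 : Fin d → ℝ) ε ⊆ Aᶜ)
    {z : Fin d → ℝ} (hz : z ∈ A) {s : ℝ} (hs : 0 ≤ s) :
    (1 + s) • z - (s * (ε / 2)) • (1 : Fin d → ℝ) ∈ A := by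
  by_contra h
  have hb : ε • (1 : Fin d → ℝ) ∈ Aᶜ := by
    apply hball
    rw [Metric.mem_closedBall, dist_zero_right]
    calc ‖ε • (1 : Fin d → ℝ)‖ = ε * ‖(1 : Fin d → ℝ)‖ := by
          rw [norm_smul, Real.norm_of_nonneg hε.le]
      _ ≤ ε * 1 := by
          gcongr
          exact (pi_norm_le_iff_of_nonneg zero_le_one).mpr (fun i => by simp)
      _ = ε := mul_one ε
  have h1s : (0:ℝ) < 1 + s := by linarith
  have hcc := hconv h hb (a := 1/(1+s)) (b := s/(1+s))
      (by positivity) (by positivity) (by field_simp)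
  have heq : (1/(1+s)) • ((1 + s) • z - (s * (ε / 2)) • (1 : Fin d → ℝ))
      + (s/(1+s)) • (ε • (1 : Fin d → ℝ))
      = z + ((s * (ε/2)) / (1+s)) • (1 : Fin d → ℝ) := by
    match_scalars <;> field_simp <;> ring
  rw [heq] at hcc
  have hle : z ≤ z + ((s * (ε/2)) / (1+s)) • (1 : Fin d → ℝ) := by
    intro i
    simp only [Pi.add_apply, Pi.smul_apply, Pi.one_apply, smul_eq_mul, mul_one]
    have : 0 ≤ s * (ε/2) / (1+s) := by positivity
    linarith
  exact (notMem_of_le hinc hcc hle) hz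

lemma scaled_shift {A : Set (Fin d → ℝ)} (hinc : IncreasingSet A) (hconv : Convex ℝ Aᶜ)
    {ε : ℝ} (hε : 0 < ε) (hball : Metric.closedBall (0 : Fin d → ℝ) ε ⊆ Aᶜ)
    {x y : ℝ} (hx : 0 < x) (hy : 0 ≤ y) {z : Fin d → ℝ}
    (hz : z ∈ (x + y) • A) : z - (y * (ε / 2)) • (1 : Fin d → ℝ) ∈ x • A := by
  obtain ⟨w, hw, rfl⟩ := hz
  rw [Set.mem_smul_set]
  refine ⟨(1 + y/x) • w - ((y/x) * (ε/2)) • (1 : Fin d → ℝ),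
    key_shift hinc hconv hε hball hw (by positivity), ?_⟩
  match_scalars <;> field_simp <;> ring

lemma smul_set_increasing {A : Set (Fin d → ℝ)} (hinc : IncreasingSet A) {x : ℝ} (hx : 0 < x) :
    IncreasingSet (x • A) := by
  rintro u ⟨w, hw, rfl⟩ v hv
  rw [Set.mem_smul_set]
  refine ⟨w + x⁻¹ • v, hinc w hw _ (fun i => by
    simpa using mul_nonneg (inv_nonneg.mpr hx.le) (hv i)), ?_⟩
  rw [smul_add, smul_inv_smul₀ hx.ne']




lemma S_bddAbove {A : Set (Fin d → ℝ)} {ε : ℝ} (hε : 0 < ε)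
    (hball : Metric.closedBall (0 : Fin d → ℝ) ε ⊆ Aᶜ) (z : Fin d → ℝ) :
    BddAbove {u : ℝ | 0 < u ∧ z ∈ u • A} := by
  refine ⟨‖z‖ / ε, fun u hu => ?_⟩
  obtain ⟨hu0, w, hw, rfl⟩ := hu
  have hεw : ε < ‖w‖ := by
    by_contra hle
    exact (hball (by simpa [Metric.mem_closedBall, dist_zero_right] using not_lt.mp hle)) hw
  rw [le_div_iff₀ hε]
  calc u * ε ≤ u * ‖w‖ := by nlinarith
    _ = ‖u • w‖ := by rw [norm_smul, Real.norm_of_nonneg hu0.le]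

lemma S_dc {A : Set (Fin d → ℝ)} (hconv : Convex ℝ Aᶜ)
    (h0 : (0 : Fin d → ℝ) ∉ closure A) {z : Fin d → ℝ} {u u' : ℝ}
    (hu' : 0 < u') (hle : u' ≤ u) (hu : z ∈ u • A) : z ∈ u' • A := by
  obtain ⟨w, hw, rfl⟩ := hu
  rw [Set.mem_smul_set]
  refine ⟨(u/u') • w, smul_mem_of_one_le hconv h0 ((one_le_div hu').mpr hle) hw, ?_⟩
  rw [smul_smul]
  congr 1
  field_simp

lemma Y_nonneg {A : Set (Fin d → ℝ)} (z : Fin d → ℝ) : 0 ≤ YofA A z :=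
  Real.sSup_nonneg (fun _ hu => hu.1.le)

lemma mem_smul_iff_lt_Y {A : Set (Fin d → ℝ)} (hopen : IsOpen A) (hconv : Convex ℝ Aᶜ)
    (h0 : (0 : Fin d → ℝ) ∉ closure A) {ε : ℝ} (hε : 0 < ε)
    (hball : Metric.closedBall (0 : Fin d → ℝ) ε ⊆ Aᶜ)
    {x : ℝ} (hx : 0 < x) (z : Fin d → ℝ) : z ∈ x • A ↔ x < YofA A z := by
  constructor
  · intro hz
    have hmem : x⁻¹ • z ∈ A := (Set.mem_smul_set_iff_inv_smul_mem₀ hx.ne' _ _).mp hz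
    have hc : ContinuousAt (fun u : ℝ => u⁻¹ • z) x :=
      ((continuousAt_inv₀ hx.ne').smul continuousAt_const)
    have hnh : (fun u : ℝ => u⁻¹ • z) ⁻¹' A ∈ nhds x :=
      hc.preimage_mem_nhds (hopen.mem_nhds hmem)
    obtain ⟨δ, hδ, hb⟩ := Metric.mem_nhds_iff.mp hnh
    have hu : x + δ/2 ∈ {u : ℝ | 0 < u ∧ z ∈ u • A} := by
      refine ⟨by linarith, ?_⟩
      have hmem2 : x + δ/2 ∈ Metric.ball x δ := by
        simp only [Metric.mem_ball, Real.dist_eq]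
        rw [abs_of_nonneg (by linarith)]
        linarith
      have := hb hmem2
      rwa [Set.mem_smul_set_iff_inv_smul_mem₀ (by positivity : x + δ/2 ≠ 0)]
    calc x < x + δ/2 := by linarith
      _ ≤ YofA A z := le_csSup (S_bddAbove hε hball z) hu
  · intro hlt
    have hne : {u : ℝ | 0 < u ∧ z ∈ u • A}.Nonempty := by
      by_contra hemp
      rw [Set.not_nonempty_iff_eq_empty] at hemp
      rw [YofA, hemp, Real.sSup_empty] at hlt
      linarith
    obtain ⟨u, hu, hxu⟩ := exists_lt_of_lt_csSup hne hlt
    exact S_dc hconv h0 hx hxu.le hu.2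

lemma Y_comp_measurable {Ω : Type*} [MeasurableSpace Ω] {A : Set (Fin d → ℝ)}
    (hopen : IsOpen A) (hconv : Convex ℝ Aᶜ) (h0 : (0 : Fin d → ℝ) ∉ closure A)
    {ε : ℝ} (hε : 0 < ε) (hball : Metric.closedBall (0 : Fin d → ℝ) ε ⊆ Aᶜ)
    {X : Ω → Fin d → ℝ} (hX : Measurable X) : Measurable fun ω => YofA A (X ω) := by
  apply measurable_of_Ioi
  intro x
  rcases lt_or_ge x 0 with hx | hx
  · have : (fun ω => YofA A (X ω)) ⁻¹' Ioi x = univ :=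
      eq_univ_of_forall fun ω => lt_of_lt_of_le hx (Y_nonneg _)
    rw [this]; exact MeasurableSet.univ
  · have : (fun ω => YofA A (X ω)) ⁻¹' Ioi x
        = ⋃ (q : ℚ) (_ : x < (q : ℝ)), X ⁻¹' ((q : ℝ) • A) := by
      ext ω
      simp only [mem_preimage, mem_Ioi, mem_iUnion]
      constructor
      · intro h
        obtain ⟨q, hq1, hq2⟩ := exists_rat_btwn h
        exact ⟨q, hq1,
          (mem_smul_iff_lt_Y hopen hconv h0 hε hball (lt_of_le_of_lt hx hq1) (X ω)).mpr hq2⟩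
      · rintro ⟨q, hq, hmem⟩
        have hq0 : (0:ℝ) < q := lt_of_le_of_lt hx hq
        exact lt_trans hq ((mem_smul_iff_lt_Y hopen hconv h0 hε hball hq0 (X ω)).mp hmem)
    rw [this]
    refine MeasurableSet.iUnion fun q => MeasurableSet.iUnion fun hq => ?_
    exact hX ((hopen.smul₀ (by exact_mod_cast (lt_of_le_of_lt hx hq).ne' : (q:ℝ) ≠ 0)).measurableSet)

end LSI

open LSI in
/-- **Proposition 2.1(iii).** Let `A ∈ ℛ` and `F ∈ 𝓛_A`. Then for every `a ∈ ℝ^d`,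
`ℙ(X ∈ x·A + a)/ℙ(X ∈ x·A) → 1` as `x → ∞`. -/
theorem longtailed_shift_insensitive
    {d : ℕ} {Ω : Type*} [MeasurableSpace Ω] (P : Measure Ω) [IsProbabilityMeasure P]
    (A : Set (Fin d → ℝ)) (hA : MemR A)
    (X : Ω → Fin d → ℝ) (hXmeas : Measurable X) (hXnonneg : ∀ ω, 0 ≤ X ω)
    (hlong : IsLongTailed (P.map fun ω => YofA A (X ω))) :
    ∀ a : Fin d → ℝ,
      Tendsto
        (fun x : ℝ => (P (X ⁻¹' shiftSet (x • A) a)).toReal / (P (X ⁻¹' (x • A))).toReal)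
        atTop (nhds 1) := by
  obtain ⟨hne, hopen, hinc, hconv, h0⟩ := hA
  -- a closed ball around 0 in the complement
  obtain ⟨δ, hδ, hballδ⟩ := Metric.mem_nhds_iff.mp
    ((isClosed_closure (s := A)).isOpen_compl.mem_nhds h0)
  set ε : ℝ := δ/2 with hεdef
  have hε : 0 < ε := by positivity
  have hball : Metric.closedBall (0 : Fin d → ℝ) ε ⊆ Aᶜ := by
    intro w hw
    have h1 : w ∈ Metric.ball (0 : Fin d → ℝ) δ := by
      rw [Metric.mem_ball]
      have := Metric.mem_closedBall.mp hw
      linarith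
    exact fun hA' => (hballδ h1) (subset_closure hA')
  set g : Ω → ℝ := fun ω => YofA A (X ω) with hgdef
  have hgmeas : Measurable g := Y_comp_measurable hopen hconv h0 hε hball hXmeas
  obtain ⟨hpos, htend⟩ := hlong
  set V : Measure ℝ := P.map g with hVdef
  have htail : ∀ x : ℝ, 0 < x → tailR V x = (P (X ⁻¹' (x • A))).toReal := by
    intro x hx
    rw [tailR, hVdef, Measure.map_apply hgmeas measurableSet_Ioi]
    have hseteq : g ⁻¹' (Set.Ioi x) = X ⁻¹' (x • A) := by
      ext ω
      simp only [mem_preimage, mem_Ioi]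
      exact (mem_smul_iff_lt_Y hopen hconv h0 hε hball hx (X ω)).symm
    rw [hseteq]
  have hVne : ∀ x : ℝ, V (Set.Ioi x) ≠ ⊤ := by
    intro x
    rw [hVdef, Measure.map_apply hgmeas measurableSet_Ioi]
    exact measure_ne_top P _
  have hposP : ∀ x : ℝ, 0 < x → 0 < (P (X ⁻¹' (x • A))).toReal := by
    intro x hx
    rw [← htail x hx]
    exact ENNReal.toReal_pos (hpos x).ne' (hVne x)
  intro a
  set t : ℝ := ‖a‖ + 1 with htdef
  have ht : 0 < t := by positivity
  set y₀ : ℝ := t / (ε/2) with hy₀def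
  have hy₀ : 0 < y₀ := by positivity
  have hyt : y₀ * (ε/2) = t := by
    rw [hy₀def]; field_simp
  -- sandwich inclusions
  have hsub1 : ∀ x : ℝ, 0 < x → X ⁻¹' ((x + y₀) • A) ⊆ X ⁻¹' (shiftSet (x • A) a) := by
    intro x hx ω hω
    have h1 : X ω - (y₀ * (ε/2)) • (1 : Fin d → ℝ) ∈ x • A :=
      scaled_shift hinc hconv hε hball hx hy₀.le hω
    rw [hyt] at h1
    have h2 := smul_set_increasing hinc hx _ h1 (t • (1 : Fin d → ℝ) - a)
      (by
        intro i
        simp only [Pi.sub_apply, Pi.smul_apply, Pi.one_apply, smul_eq_mul, mul_one, Pi.zero_apply]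
        have := norm_le_pi_norm a i
        have h3 : a i ≤ ‖a‖ := le_trans (le_abs_self _) (by simpa using this)
        rw [htdef]; linarith)
    have heq : X ω - t • (1 : Fin d → ℝ) + (t • (1 : Fin d → ℝ) - a) = X ω - a := by abel
    rw [heq] at h2
    exact ⟨X ω - a, h2, by simp⟩
  have hsub2 : ∀ x : ℝ, y₀ < x → X ⁻¹' (shiftSet (x • A) a) ⊆ X ⁻¹' ((x - y₀) • A) := by
    intro x hx ω hω
    obtain ⟨u, hu, huX⟩ := hω
    have hx' : 0 < x - y₀ := by linarith
    have hu' : u ∈ ((x - y₀) + y₀) • A := by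
      have : x - y₀ + y₀ = x := by ring
      rw [this]; exact hu
    have h1 : u - (y₀ * (ε/2)) • (1 : Fin d → ℝ) ∈ (x - y₀) • A :=
      scaled_shift hinc hconv hε hball hx' hy₀.le hu'
    rw [hyt] at h1
    have h2 := smul_set_increasing hinc hx' _ h1 (a + t • (1 : Fin d → ℝ))
      (by
        intro i
        simp only [Pi.add_apply, Pi.smul_apply, Pi.one_apply, smul_eq_mul, mul_one, Pi.zero_apply]
        have := norm_le_pi_norm a i
        have h3 : -a i ≤ ‖a‖ := le_trans (neg_le_abs _) (by simpa using this)
        rw [htdef]; linarith)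
    have heq : u - t • (1 : Fin d → ℝ) + (a + t • (1 : Fin d → ℝ)) = u + a := by abel
    rw [heq] at h2
    show X ω ∈ (x - y₀) • A
    rw [← huX]
    exact h2
  -- limits
  have hU : Tendsto (fun x => tailR V (x - y₀) / tailR V x) atTop (nhds 1) := htend y₀ hy₀
  have hL : Tendsto (fun x => tailR V (x + y₀) / tailR V x) atTop (nhds 1) := by
    have h2 : Tendsto (fun x => tailR V x / tailR V (x + y₀)) atTop (nhds 1) := by
      have h1 : Tendsto (fun x : ℝ => tailR V (x + y₀ - y₀) / tailR V (x + y₀)) atTop (nhds 1) :=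
        (htend y₀ hy₀).comp (tendsto_atTop_add_const_right atTop y₀ tendsto_id)
      simpa [add_sub_cancel_right] using h1
    have h3 := h2.inv₀ one_ne_zero
    simpa [inv_div] using h3
  refine tendsto_of_tendsto_of_tendsto_of_le_of_le' hL hU ?_ ?_
  · filter_upwards [eventually_gt_atTop y₀] with x hx
    have hx0 : 0 < x := lt_trans hy₀ hx
    rw [htail (x + y₀) (by linarith), htail x hx0]
    apply div_le_div_of_nonneg_right ?_ (hposP x hx0).le
    · exact ENNReal.toReal_mono (measure_ne_top P _) (measure_mono (hsub1 x hx0))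
  · filter_upwards [eventually_gt_atTop y₀] with x hx
    have hx0 : 0 < x := lt_trans hy₀ hx
    rw [htail (x - y₀) (by linarith), htail x hx0]
    apply div_le_div_of_nonneg_right ?_ (hposP x hx0).le
    · exact ENNReal.toReal_mono (measure_ne_top P _) (measure_mono (hsub2 x hx))
end
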